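/- There exists a constant C > 0 such that for all t > 0, a > 0 and b ∈ ℝ, |∫_0^∞ e^{i η² t − a η − i η b} dη| ≤ C/√t. -/

import Mathlib

open Complex MeasureTheory Set intervalIntegral Filter

noncomputable section

private def Hf : ℝ → ℂ := fun x => Complex.exp (Complex.I * (x:ℂ) ^ 2)
private def Hf' : ℝ → ℂ := fun x => Complex.exp (Complex.I * (x:ℂ) ^ 2) * (Complex.I * (2 * (x:ℂ)))
private def Wf (β : ℝ) : ℝ → ℂ := fun x => Complex.exp ((β:ℂ) * x) * (2 * Complex.I * (x:ℂ))⁻¹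
private def Wf' (β : ℝ) : ℝ → ℂ := fun x =>
  Complex.exp ((β:ℂ) * x) * ((β:ℂ)) * (2 * Complex.I * (x:ℂ))⁻¹
    + Complex.exp ((β:ℂ) * x) * (-(2 * Complex.I) / (2 * Complex.I * (x:ℂ)) ^ 2)

lemma lemA (β : ℝ) (hβ : β ≠ 0) {p q : ℝ} (hp : 1 ≤ p) (hpq : p ≤ q) :
    ‖∫ u in p..q, Complex.exp (Complex.I * (u:ℂ) ^ 2 + (β:ℂ) * u)‖ ≤
      2 * max (Real.exp (β * p)) (Real.exp (β * q)) := by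
  set M : ℝ := max (Real.exp (β * p)) (Real.exp (β * q)) with hMdef
  have hM0 : 0 < M := lt_max_of_lt_left (Real.exp_pos _)
  have huIcc : uIcc p q = Icc p q := uIcc_of_le hpq
  have hposx : ∀ x ∈ uIcc p q, (1:ℝ) ≤ x := by
    intro x hx; rw [huIcc] at hx; exact hp.trans hx.1
  have hpos : ∀ x ∈ uIcc p q, (0:ℝ) < x := fun x hx => lt_of_lt_of_le one_pos (hposx x hx)
  have hne : ∀ x ∈ uIcc p q, (2 * Complex.I * (x:ℂ)) ≠ 0 := by
    intro x hx
    simp only [mul_ne_zero_iff]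
    exact ⟨⟨two_ne_zero, Complex.I_ne_zero⟩, Complex.ofReal_ne_zero.2 (hpos x hx).ne'⟩
  have hexpM : ∀ x ∈ uIcc p q, Real.exp (β * x) ≤ M := by
    intro x hx; rw [huIcc] at hx
    rcases le_or_gt 0 β with h | h
    · exact le_trans (Real.exp_le_exp.2 (mul_le_mul_of_nonneg_left hx.2 h)) (le_max_right _ _)
    · exact le_trans (Real.exp_le_exp.2 (mul_le_mul_of_nonpos_left hx.1 h.le)) (le_max_left _ _)
  -- derivatives
  have hHd : ∀ x ∈ uIcc p q, HasDerivAt Hf (Hf' x) x := by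
    intro x _
    have h1 : HasDerivAt (fun z : ℂ => Complex.exp (Complex.I * z ^ 2))
        (Hf' x) ((x:ℝ) : ℂ) := by
      have h2 := ((hasDerivAt_pow 2 ((x:ℝ):ℂ)).const_mul Complex.I).cexp
      have : Complex.I * ((2:ℕ) * ((x:ℝ):ℂ) ^ (2 - 1)) = Complex.I * (2 * (x:ℂ)) := by
        push_cast; ring
      simpa [Hf', this] using h2
    exact h1.comp_ofReal
  have hWd : ∀ x ∈ uIcc p q, HasDerivAt (Wf β) (Wf' β x) x := by
    intro x hx
    have h1 : HasDerivAt (fun z : ℂ => Complex.exp ((β:ℂ) * z) * (2 * Complex.I * z)⁻¹)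
        (Wf' β x) ((x:ℝ) : ℂ) := by
      have he := ((hasDerivAt_id ((x:ℝ):ℂ)).const_mul ((β:ℂ))).cexp
      have hv := ((hasDerivAt_id ((x:ℝ):ℂ)).const_mul (2 * Complex.I)).inv (hne x hx)
      have h2 := he.mul hv
      exact h2.congr_deriv (by simp [Wf'])
    exact h1.comp_ofReal
  -- continuity / integrability
  have hcont1 : ContinuousOn Hf' (uIcc p q) := by
    apply Continuous.continuousOn; unfold Hf'; fun_prop
  have hcontH : Continuous Hf := by unfold Hf; fun_prop
  have hcontinv : ContinuousOn (fun x : ℝ => (2 * Complex.I * (x:ℂ))⁻¹) (uIcc p q) := by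
    apply ContinuousOn.inv₀
    · fun_prop
    · exact hne
  have hcontinv2 : ContinuousOn (fun x : ℝ => (-(2 * Complex.I) / (2 * Complex.I * (x:ℂ)) ^ 2)) (uIcc p q) := by
    apply ContinuousOn.div
    · fun_prop
    · fun_prop
    · intro x hx; exact pow_ne_zero 2 (hne x hx)
  have hcontW : ContinuousOn (Wf β) (uIcc p q) := by
    unfold Wf; exact (Continuous.continuousOn (by fun_prop)).mul hcontinv
  have hcontW' : ContinuousOn (Wf' β) (uIcc p q) := by
    unfold Wf'
    exact (((Continuous.continuousOn (by fun_prop)).mul hcontinv)).add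
      ((Continuous.continuousOn (by fun_prop : Continuous fun x : ℝ => Complex.exp ((β:ℂ) * x))).mul hcontinv2)
  have hint1 : IntervalIntegrable Hf' volume p q := hcont1.intervalIntegrable
  have hint2 : IntervalIntegrable (Wf' β) volume p q := hcontW'.intervalIntegrable
  -- integration by parts
  have ibp := integral_deriv_mul_eq_sub hHd hWd hint1 hint2
  have hintA : IntervalIntegrable (fun x => Hf' x * Wf β x) volume p q :=
    (hcont1.mul hcontW).intervalIntegrable
  have hintB : IntervalIntegrable (fun x => Hf x * Wf' β x) volume p q :=
    ((hcontH.continuousOn).mul hcontW').intervalIntegrable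
  have hsplit : (∫ x in p..q, (Hf' x * Wf β x + Hf x * Wf' β x))
      = (∫ x in p..q, Hf' x * Wf β x) + ∫ x in p..q, Hf x * Wf' β x :=
    integral_add hintA hintB
  have hfe : EqOn (fun u : ℝ => Complex.exp (Complex.I * (u:ℂ) ^ 2 + (β:ℂ) * u))
      (fun x => Hf' x * Wf β x) (uIcc p q) := by
    intro x hx
    have hx0 : ((x:ℂ)) ≠ 0 := Complex.ofReal_ne_zero.2 (hpos x hx).ne'
    simp only [Hf', Wf, Complex.exp_add]
    field_simp
  have hmain : (∫ u in p..q, Complex.exp (Complex.I * (u:ℂ) ^ 2 + (β:ℂ) * u))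
      = (Hf q * Wf β q - Hf p * Wf β p) - ∫ x in p..q, Hf x * Wf' β x := by
    rw [integral_congr hfe]
    have : (∫ x in p..q, Hf' x * Wf β x)
        = (∫ x in p..q, (Hf' x * Wf β x + Hf x * Wf' β x)) - ∫ x in p..q, Hf x * Wf' β x := by
      rw [hsplit]; ring
    rw [this, ibp]
  -- norms
  have hnormH : ∀ x : ℝ, ‖Hf x‖ = 1 := by
    intro x
    have : Hf x = Complex.exp ((x ^ 2 : ℝ) * Complex.I) := by
      unfold Hf; congr 1; push_cast; ring
    rw [this, Complex.norm_exp]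
    simp [pow_two, Complex.mul_im]
  have hnormE : ∀ x : ℝ, ‖Complex.exp ((β:ℂ) * x)‖ = Real.exp (β * x) := by
    intro x
    rw [show ((β:ℂ) * x) = ((β * x : ℝ) : ℂ) by push_cast; ring,
      Complex.norm_exp]
    simp
  have hnormI : ∀ x ∈ uIcc p q, ‖(2 * Complex.I * (x:ℂ))⁻¹‖ = (2 * x)⁻¹ := by
    intro x hx
    rw [norm_inv]
    simp [Complex.norm_real, _root_.abs_of_pos (hpos x hx)]
  have hnormW : ∀ x ∈ uIcc p q, ‖Wf β x‖ ≤ M / 2 := by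
    intro x hx
    unfold Wf
    rw [norm_mul, hnormE x, hnormI x hx]
    have h1 : Real.exp (β * x) ≤ M := hexpM x hx
    have h2 : (2 * x)⁻¹ ≤ 2⁻¹ := by
      apply inv_anti₀ (by norm_num)
      nlinarith [hposx x hx]
    calc Real.exp (β * x) * (2 * x)⁻¹ ≤ M * 2⁻¹ :=
          mul_le_mul h1 h2 (inv_nonneg.2 (by nlinarith [hpos x hx])) hM0.le
      _ = M / 2 := by ring
  -- bound the boundary terms
  have hbdq : ‖Hf q * Wf β q‖ ≤ M / 2 := by
    rw [norm_mul, hnormH, one_mul]; exact hnormW q (right_mem_uIcc)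
  have hbdp : ‖Hf p * Wf β p‖ ≤ M / 2 := by
    rw [norm_mul, hnormH, one_mul]; exact hnormW p (left_mem_uIcc)
  -- bound the remaining integral
  have hIoc : Set.uIoc p q ⊆ uIcc p q := uIoc_subset_uIcc
  set g : ℝ → ℝ := fun u => |β| * Real.exp (β * u) / 2 + M / 2 * (u ^ 2)⁻¹ with hgdef
  have hgcont : ContinuousOn g (uIcc p q) := by
    apply ContinuousOn.add
    · fun_prop
    · apply ContinuousOn.mul continuousOn_const
      apply ContinuousOn.inv₀ (by fun_prop)
      intro x hx; exact pow_ne_zero 2 (hpos x hx).ne'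
  have hgint : IntervalIntegrable g volume p q := hgcont.intervalIntegrable
  have hptbd : ∀ x ∈ Set.uIoc p q, ‖Hf x * Wf' β x‖ ≤ g x := by
    intro x hx
    have hx' := hIoc hx
    rw [norm_mul, hnormH, one_mul]
    unfold Wf'
    refine le_trans (norm_add_le _ _) ?_
    have h1 : ‖Complex.exp ((β:ℂ) * x) * (β:ℂ) * (2 * Complex.I * (x:ℂ))⁻¹‖
        ≤ |β| * Real.exp (β * x) / 2 := by
      rw [norm_mul, norm_mul, hnormE, hnormI x hx']
      have hxx : (2 * x)⁻¹ ≤ 2⁻¹ := by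
        apply inv_anti₀ (by norm_num); nlinarith [hposx x hx']
      have : ‖(β:ℂ)‖ = |β| := by simp [Complex.norm_real]
      rw [this]
      calc Real.exp (β * x) * |β| * (2 * x)⁻¹ ≤ Real.exp (β * x) * |β| * 2⁻¹ := by
            apply mul_le_mul_of_nonneg_left hxx (by positivity)
        _ = |β| * Real.exp (β * x) / 2 := by ring
    have h2 : ‖Complex.exp ((β:ℂ) * x) * (-(2 * Complex.I) / (2 * Complex.I * (x:ℂ)) ^ 2)‖
        ≤ M / 2 * (x ^ 2)⁻¹ := by
      rw [norm_mul, hnormE, norm_div, norm_neg, norm_pow]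
      have hn2 : ‖(2 : ℂ) * Complex.I‖ = 2 := by
        simp
      have hnx : ‖(2 : ℂ) * Complex.I * (x:ℂ)‖ = 2 * x := by
        simp [Complex.norm_real, _root_.abs_of_pos (hpos x hx')]
      rw [hn2, hnx]
      have hx0 : (0:ℝ) < x := hpos x hx'
      have : (2 : ℝ) / (2 * x) ^ 2 = 2⁻¹ * (x ^ 2)⁻¹ := by
        field_simp
      rw [this]
      have hE : Real.exp (β * x) ≤ M := hexpM x hx'
      calc Real.exp (β * x) * (2⁻¹ * (x ^ 2)⁻¹) ≤ M * (2⁻¹ * (x ^ 2)⁻¹) := by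
            apply mul_le_mul_of_nonneg_right hE (by positivity)
        _ = M / 2 * (x ^ 2)⁻¹ := by ring
    exact add_le_add h1 h2
  have htail : ‖∫ x in p..q, Hf x * Wf' β x‖ ≤ |∫ x in p..q, g x| :=
    norm_integral_le_abs_of_norm_le
      ((MeasureTheory.ae_restrict_iff' measurableSet_uIoc).2 (.of_forall hptbd)) hgint
  -- compute / bound ∫ g
  have hgsplit : (∫ x in p..q, g x)
      = (∫ x in p..q, |β| * Real.exp (β * x) / 2) + ∫ x in p..q, M / 2 * (x ^ 2)⁻¹ := by
    apply intervalIntegral.integral_add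
    · exact (Continuous.continuousOn (by fun_prop)).intervalIntegrable
    · exact (ContinuousOn.mul continuousOn_const (ContinuousOn.inv₀ (by fun_prop)
        (fun x hx => pow_ne_zero 2 (hpos x hx).ne'))).intervalIntegrable
  have hExp : (∫ x in p..q, Real.exp (β * x)) = (Real.exp (β * q) - Real.exp (β * p)) / β := by
    have hder : ∀ x ∈ uIcc p q, HasDerivAt (fun y : ℝ => Real.exp (β * y) / β) (Real.exp (β * x)) x := by
      intro x _
      have := ((hasDerivAt_id x).const_mul β).exp.div_const β
      simpa [mul_comm, mul_div_assoc, mul_div_cancel_left₀ _ hβ] using this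
    rw [integral_eq_sub_of_hasDerivAt hder
      ((Continuous.continuousOn (by fun_prop)).intervalIntegrable)]
    ring
  have hInv : (∫ x in p..q, (x ^ 2)⁻¹) = p⁻¹ - q⁻¹ := by
    have hder : ∀ x ∈ uIcc p q, HasDerivAt (fun y : ℝ => -y⁻¹) ((x ^ 2)⁻¹) x := by
      intro x hx
      exact (hasDerivAt_inv (hpos x hx).ne').neg.congr_deriv (by simp)
    rw [integral_eq_sub_of_hasDerivAt hder
      ((ContinuousOn.inv₀ (by fun_prop) (fun x hx => pow_ne_zero 2 (hpos x hx).ne')).intervalIntegrable)]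
    ring
  have hg1 : (∫ x in p..q, |β| * Real.exp (β * x) / 2) ≤ M / 2 := by
    have : (∫ x in p..q, |β| * Real.exp (β * x) / 2) = |β| / 2 * ((Real.exp (β * q) - Real.exp (β * p)) / β) := by
      rw [show (fun x : ℝ => |β| * Real.exp (β * x) / 2) = fun x : ℝ => |β| / 2 * Real.exp (β * x) from by
        funext x; ring]
      rw [intervalIntegral.integral_const_mul, hExp]
    rw [this]
    have habs : |β| / 2 * ((Real.exp (β * q) - Real.exp (β * p)) / β)
        = |Real.exp (β * q) - Real.exp (β * p)| / 2 := by
      rcases lt_or_gt_of_ne hβ with h | h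
      · rw [_root_.abs_of_neg h]
        have : Real.exp (β * q) - Real.exp (β * p) ≤ 0 := by
          have : Real.exp (β * q) ≤ Real.exp (β * p) :=
            Real.exp_le_exp.2 (mul_le_mul_of_nonpos_left hpq h.le)
          linarith
        rw [_root_.abs_of_nonpos this]
        field_simp
      · rw [_root_.abs_of_pos h]
        have : 0 ≤ Real.exp (β * q) - Real.exp (β * p) := by
          have : Real.exp (β * p) ≤ Real.exp (β * q) :=
            Real.exp_le_exp.2 (mul_le_mul_of_nonneg_left hpq h.le)
          linarith
        rw [_root_.abs_of_nonneg this]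
        field_simp
    rw [habs]
    have h1 : Real.exp (β * q) - Real.exp (β * p) ≤ M := by
      have := Real.exp_pos (β * p); have := le_max_right (Real.exp (β * p)) (Real.exp (β * q)); linarith
    have h2 : -(M) ≤ Real.exp (β * q) - Real.exp (β * p) := by
      have := Real.exp_pos (β * q); have := le_max_left (Real.exp (β * p)) (Real.exp (β * q)); linarith
    have : |Real.exp (β * q) - Real.exp (β * p)| ≤ M := abs_le.2 ⟨h2, h1⟩
    linarith
  have hg2 : (∫ x in p..q, M / 2 * (x ^ 2)⁻¹) ≤ M / 2 := by
    rw [intervalIntegral.integral_const_mul, hInv]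
    have hq0 : 0 < q := lt_of_lt_of_le one_pos (hp.trans hpq)
    have : p⁻¹ - q⁻¹ ≤ 1 := by
      have h1 : p⁻¹ ≤ 1 := by
        have hp0 : (0:ℝ) < p := lt_of_lt_of_le one_pos hp
        nlinarith [mul_inv_cancel₀ hp0.ne', inv_pos.2 hp0]
      have h2 : 0 < q⁻¹ := inv_pos.2 hq0
      linarith
    nlinarith
  have hgnn : 0 ≤ ∫ x in p..q, g x := by
    apply integral_nonneg hpq
    intro x hx
    have h1 : 0 ≤ |β| * Real.exp (β * x) / 2 := by positivity
    have h2 : 0 ≤ M / 2 * (x ^ 2)⁻¹ := by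
      apply mul_nonneg (by linarith) (inv_nonneg.2 (sq_nonneg x))
    exact add_nonneg h1 h2
  have hgle : |∫ x in p..q, g x| ≤ M := by
    rw [_root_.abs_of_nonneg hgnn, hgsplit]; linarith
  -- final assembly
  rw [hmain]
  calc ‖(Hf q * Wf β q - Hf p * Wf β p) - ∫ x in p..q, Hf x * Wf' β x‖
      ≤ ‖Hf q * Wf β q - Hf p * Wf β p‖ + ‖∫ x in p..q, Hf x * Wf' β x‖ := norm_sub_le _ _
    _ ≤ (‖Hf q * Wf β q‖ + ‖Hf p * Wf β p‖) + ‖∫ x in p..q, Hf x * Wf' β x‖ := by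
        have := norm_sub_le (Hf q * Wf β q) (Hf p * Wf β p); linarith
    _ ≤ (M / 2 + M / 2) + M := by
        have := htail.trans hgle; linarith
    _ = 2 * M := by ring

private def Ff (α : ℝ) : ℝ → ℂ := fun u => Complex.exp (Complex.I * (u:ℂ) ^ 2 - (α:ℂ) * u)

lemma contFf (α : ℝ) : Continuous (Ff α) := by unfold Ff; fun_prop

lemma normFf (α : ℝ) (u : ℝ) : ‖Ff α u‖ = Real.exp (-α * u) := by
  have h : Complex.I * (u:ℂ) ^ 2 - (α:ℂ) * u
      = ((-α * u : ℝ) : ℂ) + ((u ^ 2 : ℝ) : ℂ) * Complex.I := by push_cast; ring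
  unfold Ff
  rw [h, Complex.norm_exp]
  simp [pow_two, Complex.mul_im]

lemma lemAF {α : ℝ} (hα : 0 < α) {p q : ℝ} (hp : 1 ≤ p) (hpq : p ≤ q) :
    ‖∫ u in p..q, Ff α u‖ ≤ 2 * Real.exp (-α * p) := by
  have h1 : (∫ u in p..q, Ff α u)
      = ∫ u in p..q, Complex.exp (Complex.I * (u:ℂ) ^ 2 + ((-α : ℝ) : ℂ) * u) := by
    apply intervalIntegral.integral_congr
    intro x _
    unfold Ff; congr 1; push_cast; ring
  rw [h1]
  have h2 := lemA (-α) (neg_ne_zero.2 hα.ne') hp hpq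
  have h3 : max (Real.exp (-α * p)) (Real.exp (-α * q)) = Real.exp (-α * p) := by
    apply max_eq_left
    apply Real.exp_le_exp.2
    nlinarith
  rw [h3] at h2
  exact h2

lemma lemCst {α : ℝ} (hα : 0 < α) {d e : ℝ} (hde : d ≤ e) :
    ‖∫ u in d..e, Ff α u‖ ≤ Real.exp (-α * d) * (e - d) := by
  have := intervalIntegral.norm_integral_le_of_norm_le_const
    (C := Real.exp (-α * d)) (f := Ff α) (a := d) (b := e) ?_
  · calc ‖∫ u in d..e, Ff α u‖ ≤ Real.exp (-α * d) * |e - d| := this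
      _ = Real.exp (-α * d) * (e - d) := by rw [_root_.abs_of_nonneg (by linarith : (0:ℝ) ≤ e - d)]
  · intro x hx
    rw [Set.uIoc_of_le hde] at hx
    rw [normFf]
    apply Real.exp_le_exp.2
    nlinarith [hx.1]

set_option maxHeartbeats 1000000 in
lemma lemBfin {α : ℝ} (hα : 0 < α) (c q : ℝ) (hq1 : 1 ≤ q) (hcq : c ≤ q) :
    ‖∫ u in c..q, Ff α u‖ ≤ 6 * Real.exp (-α * c) := by
  have hcont := contFf α
  have hE : (0:ℝ) < Real.exp (-α * c) := Real.exp_pos _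
  have hmono : ∀ x y : ℝ, x ≤ y → Real.exp (-α * y) ≤ Real.exp (-α * x) := by
    intro x y hxy; apply Real.exp_le_exp.2; nlinarith
  rcases le_or_gt 1 c with hc1 | hc1
  · have := lemAF hα hc1 hcq
    linarith
  · rcases le_or_gt (-1) c with hcm | hcm
    · -- -1 ≤ c < 1
      have hi1 : IntervalIntegrable (Ff α) volume c 1 := hcont.intervalIntegrable c 1
      have hi2 : IntervalIntegrable (Ff α) volume 1 q := hcont.intervalIntegrable 1 q
      rw [← intervalIntegral.integral_add_adjacent_intervals hi1 hi2]
      have b1 : ‖∫ u in c..(1:ℝ), Ff α u‖ ≤ Real.exp (-α * c) * (1 - c) := lemCst hα hc1.le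
      have b2 : ‖∫ u in (1:ℝ)..q, Ff α u‖ ≤ 2 * Real.exp (-α * 1) := lemAF hα le_rfl hq1
      have h2 : Real.exp (-α * 1) ≤ Real.exp (-α * c) := hmono c 1 hc1.le
      calc ‖(∫ u in c..(1:ℝ), Ff α u) + ∫ u in (1:ℝ)..q, Ff α u‖
          ≤ ‖∫ u in c..(1:ℝ), Ff α u‖ + ‖∫ u in (1:ℝ)..q, Ff α u‖ := norm_add_le _ _
        _ ≤ Real.exp (-α * c) * (1 - c) + 2 * Real.exp (-α * 1) := add_le_add b1 b2
        _ ≤ 6 * Real.exp (-α * c) := by nlinarith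
    · -- c < -1
      have hi1 : IntervalIntegrable (Ff α) volume c (-1) := hcont.intervalIntegrable _ _
      have hi2 : IntervalIntegrable (Ff α) volume (-1) 1 := hcont.intervalIntegrable _ _
      have hi3 : IntervalIntegrable (Ff α) volume 1 q := hcont.intervalIntegrable _ _
      rw [← intervalIntegral.integral_add_adjacent_intervals (hi1.trans hi2) hi3,
        ← intervalIntegral.integral_add_adjacent_intervals hi1 hi2]
      -- reflection bound for c..-1
      have hrefl : (∫ u in c..(-1:ℝ), Ff α u)
          = ∫ v in (1:ℝ)..(-c), Complex.exp (Complex.I * (v:ℂ) ^ 2 + ((α : ℝ) : ℂ) * v) := by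
        have h0 := intervalIntegral.integral_comp_neg (a := (1:ℝ)) (b := -c) (Ff α)
        rw [neg_neg] at h0
        have h1 : (∫ v in (1:ℝ)..(-c), Ff α (-v))
            = ∫ v in (1:ℝ)..(-c), Complex.exp (Complex.I * (v:ℂ) ^ 2 + ((α : ℝ) : ℂ) * v) := by
          apply intervalIntegral.integral_congr
          intro x _
          show Ff α (-x) = _
          unfold Ff; congr 1; push_cast; ring
        exact h0.symm.trans h1
      have b1 : ‖∫ u in c..(-1:ℝ), Ff α u‖ ≤ 2 * Real.exp (-α * c) := by
        rw [hrefl]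
        have h2 := lemA α hα.ne' le_rfl (by linarith : (1:ℝ) ≤ -c)
        have h3 : max (Real.exp (α * 1)) (Real.exp (α * -c)) = Real.exp (α * -c) := by
          apply max_eq_right
          apply Real.exp_le_exp.2
          nlinarith
        rw [h3] at h2
        calc ‖∫ v in (1:ℝ)..(-c), Complex.exp (Complex.I * (v:ℂ) ^ 2 + ((α : ℝ) : ℂ) * v)‖
            ≤ 2 * Real.exp (α * -c) := h2
          _ = 2 * Real.exp (-α * c) := by ring_nf
      have b2 : ‖∫ u in (-1:ℝ)..1, Ff α u‖ ≤ Real.exp (-α * (-1)) * (1 - (-1)) :=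
        lemCst hα (by norm_num : (-1:ℝ) ≤ 1)
      have b3 : ‖∫ u in (1:ℝ)..q, Ff α u‖ ≤ 2 * Real.exp (-α * 1) := lemAF hα le_rfl hq1
      have h2 : Real.exp (-α * (-1)) ≤ Real.exp (-α * c) := hmono c (-1) hcm.le
      have h3 : Real.exp (-α * 1) ≤ Real.exp (-α * c) := hmono c 1 (by linarith)
      calc ‖((∫ u in c..(-1:ℝ), Ff α u) + ∫ u in (-1:ℝ)..1, Ff α u) + ∫ u in (1:ℝ)..q, Ff α u‖
          ≤ ‖(∫ u in c..(-1:ℝ), Ff α u) + ∫ u in (-1:ℝ)..1, Ff α u‖ + ‖∫ u in (1:ℝ)..q, Ff α u‖ :=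
            norm_add_le _ _
        _ ≤ (‖∫ u in c..(-1:ℝ), Ff α u‖ + ‖∫ u in (-1:ℝ)..1, Ff α u‖) + ‖∫ u in (1:ℝ)..q, Ff α u‖ := by
            have := norm_add_le (∫ u in c..(-1:ℝ), Ff α u) (∫ u in (-1:ℝ)..1, Ff α u)
            linarith
        _ ≤ (2 * Real.exp (-α * c) + Real.exp (-α * (-1)) * (1 - (-1))) + 2 * Real.exp (-α * 1) := by
            have := add_le_add (add_le_add b1 b2) b3
            linarith
        _ ≤ 6 * Real.exp (-α * c) := by nlinarith

lemma intFf {α : ℝ} (hα : 0 < α) (c : ℝ) : IntegrableOn (Ff α) (Ioi c) := by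
  apply Integrable.mono' (exp_neg_integrableOn_Ioi c hα)
  · exact ((contFf α).aestronglyMeasurable).restrict
  · filter_upwards with x
    rw [normFf]

lemma lemB {α : ℝ} (hα : 0 < α) (c : ℝ) :
    ‖∫ u in Ioi c, Ff α u‖ ≤ 6 * Real.exp (-α * c) := by
  have htend := intervalIntegral_tendsto_integral_Ioi c (intFf hα c) (Filter.tendsto_id (α := ℝ))
  apply le_of_tendsto htend.norm
  filter_upwards [Filter.eventually_ge_atTop (max 1 c)] with q hq
  exact lemBfin hα c q (le_trans (le_max_left _ _) hq) (le_trans (le_max_right _ _) hq)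

lemma shiftIoi (f : ℝ → ℂ) (c d : ℝ) :
    ∫ x in Ioi c, f (x + d) = ∫ x in Ioi (c + d), f x := by
  rw [← MeasureTheory.integral_indicator (measurableSet_Ioi (a := c)),
    ← MeasureTheory.integral_indicator (measurableSet_Ioi (a := c + d)),
    ← integral_add_right_eq_self (Set.indicator (Ioi (c + d)) f) d]
  congr 1
  funext x
  by_cases h : x ∈ Ioi c
  · rw [Set.indicator_of_mem h, Set.indicator_of_mem]
    exact add_lt_add_left h d
  · rw [Set.indicator_of_notMem h, Set.indicator_of_notMem]
    intro hmem
    exact h (by simpa [Set.mem_Ioi] using lt_of_add_lt_add_right (hmem : c + d < x + d))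

lemma lemC {α : ℝ} (hα : 0 < α) (β : ℝ) :
    ‖∫ η in Ioi (0:ℝ), Complex.exp (Complex.I * (η:ℂ) ^ 2 - (α:ℂ) * η - Complex.I * (β:ℂ) * η)‖
      ≤ 6 := by
  have hpt : ∀ η : ℝ,
      Complex.exp (Complex.I * (η:ℂ) ^ 2 - (α:ℂ) * η - Complex.I * (β:ℂ) * η)
        = Complex.exp (-Complex.I * (β:ℂ) ^ 2 / 4 + (α:ℂ) * (-β/2 : ℝ)) * Ff α (η + (-β/2 : ℝ)) := by
    intro η
    unfold Ff
    rw [← Complex.exp_add]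
    congr 1
    push_cast
    ring
  have h1 : (∫ η in Ioi (0:ℝ),
        Complex.exp (Complex.I * (η:ℂ) ^ 2 - (α:ℂ) * η - Complex.I * (β:ℂ) * η))
      = Complex.exp (-Complex.I * (β:ℂ) ^ 2 / 4 + (α:ℂ) * (-β/2 : ℝ))
          * ∫ x in Ioi ((0:ℝ) + (-β/2)), Ff α x := by
    simp only [hpt]
    rw [MeasureTheory.integral_const_mul, shiftIoi (Ff α) 0 (-β/2)]
  rw [h1, norm_mul]
  have hK : ‖Complex.exp (-Complex.I * (β:ℂ) ^ 2 / 4 + (α:ℂ) * (-β/2 : ℝ))‖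
      = Real.exp (α * (-β/2)) := by
    rw [show (-Complex.I * (β:ℂ) ^ 2 / 4 + (α:ℂ) * (-β/2 : ℝ))
        = ((α * (-β/2) : ℝ) : ℂ) + ((-β^2/4 : ℝ) : ℂ) * Complex.I by push_cast; ring,
      Complex.norm_exp]
    simp [pow_two, Complex.mul_im]
  rw [hK]
  have h2 := lemB hα ((0:ℝ) + (-β/2))
  calc Real.exp (α * (-β/2)) * ‖∫ x in Ioi ((0:ℝ) + (-β/2)), Ff α x‖
      ≤ Real.exp (α * (-β/2)) * (6 * Real.exp (-α * ((0:ℝ) + (-β/2)))) := by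
        apply mul_le_mul_of_nonneg_left h2 (Real.exp_pos _).le
    _ = 6 * Real.exp (α * (-β/2) + -α * ((0:ℝ) + (-β/2))) := by rw [Real.exp_add]; ring
    _ = 6 := by norm_num

end

/-- There is `C > 0` such that for all `t > 0`, `a > 0`, `b ∈ ℝ`,
`|∫_0^∞ e^{iη²t − aη − iηb} dη| ≤ C/√t`. -/
theorem stmt1 :
    ∃ C : ℝ, 0 < C ∧ ∀ t a b : ℝ, 0 < t → 0 < a →
      ‖∫ η in Set.Ioi (0 : ℝ),
          Complex.exp (Complex.I * (η : ℂ) ^ 2 * (t : ℂ) - (a : ℂ) * (η : ℂ)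
            - Complex.I * (η : ℂ) * (b : ℂ))‖ ≤ C / Real.sqrt t := by
  refine ⟨6, by norm_num, ?_⟩
  intro t a b ht ha
  set s : ℝ := Real.sqrt t with hs
  have hs0 : 0 < s := Real.sqrt_pos.2 ht
  have hss : s * s = t := Real.mul_self_sqrt ht.le
  have hssC : (s:ℂ) * s = (t:ℂ) := by rw [← hss]; push_cast; ring
  have hsne : (s:ℂ) ≠ 0 := Complex.ofReal_ne_zero.2 hs0.ne'
  have hscale := MeasureTheory.integral_comp_mul_left_Ioi
    (fun u : ℝ => Complex.exp (Complex.I * (u:ℂ) ^ 2 - ((a/s : ℝ):ℂ) * u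
      - Complex.I * ((b/s : ℝ):ℂ) * u)) 0 hs0
  rw [mul_zero] at hscale
  have h2 : (∫ η in Set.Ioi (0 : ℝ),
        Complex.exp (Complex.I * (η : ℂ) ^ 2 * (t : ℂ) - (a : ℂ) * (η : ℂ)
          - Complex.I * (η : ℂ) * (b : ℂ)))
      = s⁻¹ • ∫ u in Set.Ioi (0:ℝ),
          Complex.exp (Complex.I * (u:ℂ) ^ 2 - ((a/s : ℝ):ℂ) * u
            - Complex.I * ((b/s : ℝ):ℂ) * u) := by
    rw [← hscale]
    refine MeasureTheory.integral_congr_ae (Filter.Eventually.of_forall fun x => ?_)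
    show Complex.exp _ = Complex.exp _
    congr 1
    push_cast
    field_simp
    linear_combination (-(Complex.I * (x:ℂ) ^ 2)) * hssC
  rw [h2, norm_smul, Real.norm_eq_abs, _root_.abs_of_pos (inv_pos.2 hs0)]
  have hα : 0 < a / s := div_pos ha hs0
  have h3 := lemC hα (b / s)
  calc s⁻¹ * ‖∫ u in Set.Ioi (0:ℝ),
        Complex.exp (Complex.I * (u:ℂ) ^ 2 - ((a/s : ℝ):ℂ) * u
          - Complex.I * ((b/s : ℝ):ℂ) * u)‖
      ≤ s⁻¹ * 6 := mul_le_mul_of_nonneg_left h3 (inv_nonneg.2 hs0.le)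
    _ = 6 / s := by rw [div_eq_mul_inv]; ring
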